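/- Let a ∈ ℝ_{≥0}^n with a_1 ≥ a_2 ≥ ... ≥ a_n ≥ 0, and for s ∈ ℝ define the halfspace f_s(x) = 1{a·x > s} on {-1,1}^n. Then for any s, t ∈ ℝ with |s| ≤ t, we have 5·I_1(f_s) ≥ I_1(f_t). -/

import Mathlib

open Finset

noncomputable section
open scoped Classical

/-- The ±1 value associated to a Boolean bit. -/
def sgn1 (b : Bool) : ℝ := if b then 1 else -1

/-- Probability of an event under the uniform measure on `{-1,1}^n`. -/
def cubePr (n : ℕ) (P : (Fin n → Bool) → Prop) : ℝ :=
  ((univ.filter P).card : ℝ) / 2 ^ n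

/-- Expectation of a function under the uniform measure on `{-1,1}^n`. -/
def cubeE (n : ℕ) (f : (Fin n → Bool) → ℝ) : ℝ := (∑ x, f x) / 2 ^ n

/-- The linear form `a · x = ∑ aᵢ xᵢ` on `{-1,1}^n`. -/
def lin (n : ℕ) (a : Fin n → ℝ) (x : Fin n → Bool) : ℝ := ∑ i, a i * sgn1 (x i)

/-- The halfspace `1{a · x > t}` as a 0/1-valued function. -/
def halfspace (n : ℕ) (a : Fin n → ℝ) (t : ℝ) (x : Fin n → Bool) : ℝ :=
  if t < lin n a x then 1 else 0

/-- The influence of coordinate `i` on `f`: the probability that flipping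
coordinate `i` changes the value of `f`. -/
def infl (n : ℕ) (i : Fin n) (f : (Fin n → Bool) → ℝ) : ℝ :=
  cubePr n (fun x => f x ≠ f (Function.update x i (!x i)))

/-- The degree-1 Fourier coefficient `f̂({i}) = E[f(x)·xᵢ]`. -/
def fCoeff (n : ℕ) (f : (Fin n → Bool) → ℝ) (i : Fin n) : ℝ :=
  cubeE n (fun x => f x * sgn1 (x i))

/-- The degree-1 Fourier weight `W¹(f) = ∑ᵢ f̂({i})²`. -/
def W1 (n : ℕ) (f : (Fin n → Bool) → ℝ) : ℝ := ∑ i, (fCoeff n f i) ^ 2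

namespace FID

/-- Count of sign vectors `σ ∈ {±1}^L` with `P (∑ σᵢ bᵢ)`. -/
def N : List ℝ → (ℝ → Prop) → ℕ
  | [], P => if P 0 then 1 else 0
  | b :: L, P => N L (fun z => P (b + z)) + N L (fun z => P (-b + z))

lemma N_congr : ∀ (L : List ℝ) {P Q : ℝ → Prop}, (∀ z, P z ↔ Q z) → N L P = N L Q
  | [], P, Q, h => by simp only [N]; rw [if_congr (h 0) rfl rfl]
  | b :: L, P, Q, h => by
      simp only [N]
      rw [N_congr L (fun z => h (b + z)), N_congr L (fun z => h (-b + z))]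

lemma N_le_add : ∀ (L : List ℝ) {P Q R : ℝ → Prop}, (∀ z, P z → Q z ∨ R z) →
    N L P ≤ N L Q + N L R
  | [], P, Q, R, h => by
      simp only [N]
      by_cases hP : P 0
      · rcases h 0 hP with h' | h'
        · rw [if_pos hP, if_pos h']; omega
        · rw [if_pos hP, if_pos h']; omega
      · rw [if_neg hP]; omega
  | b :: L, P, Q, R, h => by
      simp only [N]
      have h1 := N_le_add L (fun z => h (b + z))
      have h2 := N_le_add L (fun z => h (-b + z))
      omega

lemma N_neg : ∀ (L : List ℝ) (P : ℝ → Prop), N L (fun z => P (-z)) = N L P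
  | [], P => by simp only [N, neg_zero]
  | b :: L, P => by
      simp only [N]
      have e1 : N L (fun z => P (-(b + z))) = N L (fun z => P (-b + -z)) :=
        N_congr L fun z => iff_of_eq (congrArg P (by ring))
      have e2 : N L (fun z => P (-(-b + z))) = N L (fun z => P (b + -z)) :=
        N_congr L fun z => iff_of_eq (congrArg P (by ring))
      have e3 : N L (fun z => P (-b + -z)) = N L (fun z => P (-b + z)) :=
        N_neg L (fun w => P (-b + w))
      have e4 : N L (fun z => P (b + -z)) = N L (fun z => P (b + z)) :=
        N_neg L (fun w => P (b + w))
      rw [e1, e2, e3, e4, Nat.add_comm]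

/-- Membership in a half-open interval; `o = true` means `(u, v]`, `o = false` means `[u, v)`. -/
def Jmem (o : Bool) (u v z : ℝ) : Prop := if o then u < z ∧ z ≤ v else u ≤ z ∧ z < v

lemma N_Jmem_reflect (L : List ℝ) (o : Bool) (u v : ℝ) :
    N L (Jmem o u v) = N L (Jmem (!o) (-v) (-u)) := by
  rw [← N_neg L (Jmem o u v)]
  refine N_congr L fun z => ?_
  cases o <;> simp only [Jmem, Bool.not_true, Bool.not_false, if_true, if_false] <;>
    constructor <;> rintro ⟨h1, h2⟩ <;> exact ⟨by linarith, by linarith⟩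

lemma NI_cons (L : List ℝ) (b x y : ℝ) :
    N (b :: L) (fun z => x < z ∧ z ≤ y)
      = N L (fun z => x - b < z ∧ z ≤ y - b) + N L (fun z => x + b < z ∧ z ≤ y + b) := by
  simp only [N]
  congr 1
  · exact N_congr L fun z => by constructor <;> rintro ⟨h1, h2⟩ <;> exact ⟨by linarith, by linarith⟩
  · exact N_congr L fun z => by constructor <;> rintro ⟨h1, h2⟩ <;> exact ⟨by linarith, by linarith⟩

lemma NJ_cons (L : List ℝ) (b u v : ℝ) (o : Bool) :
    N (b :: L) (Jmem o u v)
      = N L (Jmem o (u - b) (v - b)) + N L (Jmem o (u + b) (v + b)) := by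
  simp only [N]
  congr 1
  · refine N_congr L fun z => ?_
    cases o <;> simp only [Jmem, if_true, if_false] <;>
      constructor <;> rintro ⟨h1, h2⟩ <;> exact ⟨by linarith, by linarith⟩
  · refine N_congr L fun z => ?_
    cases o <;> simp only [Jmem, if_true, if_false] <;>
      constructor <;> rintro ⟨h1, h2⟩ <;> exact ⟨by linarith, by linarith⟩

/-- The central case of the induction: when the window of `J` is nearly centered. -/
lemma bad_core (L : List ℝ) (a b : ℝ) (hb0 : 0 ≤ b) (hba : b ≤ a)
    (IH : ∀ (x y u v : ℝ) (o : Bool), y - x ≤ 2*a → v = u + 2*a → u ≤ x → -v ≤ x →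
      N L (fun z => x < z ∧ z ≤ y) ≤ 5 * N L (Jmem o u v))
    (x y u v : ℝ) (o : Bool) (hyx : y - x ≤ 2*a) (hvu : v = u + 2*a)
    (hxu : u ≤ x) (hxv : -v ≤ x) (hx1 : x < -v + 2*b) (hc : 0 ≤ u + v) :
    N L (fun z => x - b < z ∧ z ≤ y - b) + N L (fun z => x + b < z ∧ z ≤ y + b)
      ≤ 5 * (N L (Jmem o (u - b) (v - b)) + N L (Jmem o (u + b) (v + b))) := by
  have hy : y < -u + 2*b := by linarith
  have key1 : N L (fun z => x - b < z ∧ z ≤ y - b)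
      ≤ N L (Jmem o (u - b) (v - b)) + N L (Jmem o (u + b) (v + b)) := by
    refine N_le_add L fun z hz => ?_
    obtain ⟨hz1, hz2⟩ := hz
    cases o
    · -- o = false : `[·,·)` intervals
      by_cases hzv : z < v - b
      · left; simp only [Jmem, if_false]; exact ⟨by linarith, hzv⟩
      · right; simp only [Jmem, if_false]
        push_neg at hzv
        exact ⟨by linarith, by linarith⟩
    · -- o = true : `(·,·]` intervals
      by_cases hzv : z ≤ v - b
      · left; simp only [Jmem, if_true]; exact ⟨by linarith, hzv⟩
      · right; simp only [Jmem, if_true]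
        push_neg at hzv
        exact ⟨by linarith, by linarith⟩
  have key2a : N L (fun z => x + b < z ∧ z ≤ y + b) ≤ 5 * N L (Jmem o (u - b) (v - b)) :=
    IH (x + b) (y + b) (u - b) (v - b) o (by linarith) (by linarith) (by linarith) (by linarith)
  have key2b : N L (fun z => x + b < z ∧ z ≤ y + b) ≤ 5 * N L (Jmem o (u + b) (v + b)) :=
    IH (x + b) (y + b) (u + b) (v + b) o (by linarith) (by linarith) (by linarith) (by linarith)
  omega

/-- The main combinatorial comparison: counting sign configurations in a window `(x, y]`
of length `≤ 2a` lying to the right of both a window `J` of length `2a` and its reflection,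
compared with the count in `J`.  All weights are in `[0, a]`. -/
lemma main (a : ℝ) : ∀ (L : List ℝ), (∀ b ∈ L, 0 ≤ b ∧ b ≤ a) →
    ∀ (x y u v : ℝ) (o : Bool), y - x ≤ 2*a → v = u + 2*a → u ≤ x → -v ≤ x →
    N L (fun z => x < z ∧ z ≤ y) ≤ 5 * N L (Jmem o u v) := by
  intro L
  induction L with
  | nil =>
      intro _ x y u v o hyx hvu hxu hxv
      simp only [N]
      by_cases hI : x < 0 ∧ 0 ≤ y
      · have hJ : Jmem o u v 0 := by
          cases o <;> simp only [Jmem, if_true, if_false]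
          · exact ⟨by linarith [hI.1], by linarith [hI.1]⟩
          · exact ⟨by linarith [hI.1], by linarith [hI.1]⟩
        rw [if_pos hI, if_pos hJ]; omega
      · rw [if_neg hI]; omega
  | cons b L IH =>
      intro hW x y u v o hyx hvu hxu hxv
      have hb := hW b List.mem_cons_self
      have hL : ∀ c ∈ L, 0 ≤ c ∧ c ≤ a := fun c hc => hW c (List.mem_cons_of_mem b hc)
      have IH' := IH hL
      by_cases h1 : -v + 2*b ≤ x
      · rw [NI_cons, NJ_cons]
        have c1 := IH' (x - b) (y - b) (u - b) (v - b) o (by linarith) (by linarith)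
          (by linarith) (by linarith)
        have c2 := IH' (x + b) (y + b) (u + b) (v + b) o (by linarith) (by linarith)
          (by linarith) (by linarith)
        omega
      by_cases h2 : u + 2*b ≤ x
      · rw [NI_cons, NJ_cons]
        have c1 := IH' (x - b) (y - b) (u + b) (v + b) o (by linarith) (by linarith)
          (by linarith) (by linarith)
        have c2 := IH' (x + b) (y + b) (u - b) (v - b) o (by linarith) (by linarith)
          (by linarith) (by linarith)
        omega
      push_neg at h1 h2
      rcases le_or_gt 0 (u + v) with hc | hc
      · rw [NI_cons, NJ_cons]
        exact bad_core L a b hb.1 hb.2 IH' x y u v o hyx hvu hxu hxv h1 hc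
      · rw [NI_cons, N_Jmem_reflect (b :: L) o u v, NJ_cons]
        exact bad_core L a b hb.1 hb.2 IH' x y (-v) (-u) (!o) hyx (by linarith) hxv
          (by linarith) (by linarith) (by linarith)

lemma flip_cond (A S r e : ℝ) (hA : 0 ≤ A) (he : e = 1 ∨ e = -1) :
    ((if r < A * e + S then (1:ℝ) else 0) ≠ (if r < A * -e + S then (1:ℝ) else 0))
      ↔ (r - A < S ∧ S ≤ r + A) := by
  rcases he with rfl | rfl <;> split_ifs with h1 h2 h2 <;> norm_num <;>
    first
      | (constructor <;> linarith)
      | (intros; linarith)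

lemma count_eq : ∀ (m : ℕ) (w : Fin m → ℝ) (P : ℝ → Prop),
    (∑ σ : Fin m → Bool, if P (∑ j, w j * sgn1 (σ j)) then 1 else 0) = N (List.ofFn w) P
  | 0, w, P => by
      have h : ∀ σ : Fin 0 → Bool,
          (if P (∑ j, w j * sgn1 (σ j)) then (1:ℕ) else 0) = if P 0 then 1 else 0 := by
        intro σ; simp
      rw [Finset.sum_congr rfl (fun σ _ => h σ), Finset.sum_const, Finset.card_univ]
      simp [N]
  | m + 1, w, P => by
      rw [List.ofFn_succ]
      simp only [N]
      rw [← count_eq m (fun j => w j.succ) (fun z => P (w 0 + z)),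
          ← count_eq m (fun j => w j.succ) (fun z => P (-(w 0) + z))]
      rw [← Equiv.sum_comp (Fin.consEquiv fun _ : Fin (m+1) => Bool)
            (fun σ : Fin (m+1) → Bool => if P (∑ j, w j * sgn1 (σ j)) then (1:ℕ) else 0),
          Fintype.sum_prod_type, Fintype.sum_bool]
      congr 1
      · refine Finset.sum_congr rfl fun τ _ => if_congr (iff_of_eq (congrArg P ?_)) rfl rfl
        rw [Fin.sum_univ_succ]
        simp [sgn1]
      · refine Finset.sum_congr rfl fun τ _ => if_congr (iff_of_eq (congrArg P ?_)) rfl rfl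
        rw [Fin.sum_univ_succ]
        simp [sgn1]

lemma card_eq (m : ℕ) (a : Fin (m+1) → ℝ) (hA : 0 ≤ a 0) (r : ℝ) :
    (univ.filter fun σ : Fin (m+1) → Bool =>
        halfspace (m+1) a r σ ≠ halfspace (m+1) a r (Function.update σ 0 (!σ 0))).card
      = 2 * N (List.ofFn fun j : Fin m => a j.succ)
          (fun z => r - a 0 < z ∧ z ≤ r + a 0) := by
  have step1 : ∀ σ : Fin (m+1) → Bool,
      (halfspace (m+1) a r σ ≠ halfspace (m+1) a r (Function.update σ 0 (!σ 0)))
        ↔ (r - a 0 < (∑ j : Fin m, a j.succ * sgn1 (σ j.succ))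
            ∧ (∑ j : Fin m, a j.succ * sgn1 (σ j.succ)) ≤ r + a 0) := by
    intro σ
    have hlin1 : lin (m+1) a σ
        = a 0 * sgn1 (σ 0) + ∑ j : Fin m, a j.succ * sgn1 (σ j.succ) := by
      rw [lin, Fin.sum_univ_succ]
    have hlin2 : lin (m+1) a (Function.update σ 0 (!σ 0))
        = a 0 * -sgn1 (σ 0) + ∑ j : Fin m, a j.succ * sgn1 (σ j.succ) := by
      have hup : ∀ j : Fin m, Function.update σ 0 (!σ 0) j.succ = σ j.succ :=
        fun j => Function.update_of_ne (Fin.succ_ne_zero j) _ _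
      rw [lin, Fin.sum_univ_succ, Function.update_self]
      simp only [hup]
      cases σ 0 <;> simp [sgn1]
    rw [halfspace, halfspace, hlin1, hlin2]
    exact flip_cond (a 0) _ r (sgn1 (σ 0)) hA
      (by cases σ 0 <;> simp [sgn1])
  rw [Finset.card_filter]
  calc (∑ σ : Fin (m+1) → Bool, if halfspace (m+1) a r σ
          ≠ halfspace (m+1) a r (Function.update σ 0 (!σ 0)) then 1 else 0)
      = ∑ σ : Fin (m+1) → Bool,
          (if r - a 0 < (∑ j : Fin m, a j.succ * sgn1 (σ j.succ))
              ∧ (∑ j : Fin m, a j.succ * sgn1 (σ j.succ)) ≤ r + a 0 then 1 else 0) :=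
        Finset.sum_congr rfl fun σ _ => if_congr (step1 σ) rfl rfl
    _ = ∑ p : Bool × (Fin m → Bool),
          (if r - a 0 < (∑ j : Fin m, a j.succ * sgn1 (p.2 j))
              ∧ (∑ j : Fin m, a j.succ * sgn1 (p.2 j)) ≤ r + a 0 then 1 else 0) := by
        rw [← Equiv.sum_comp (Fin.consEquiv fun _ : Fin (m+1) => Bool)
            (fun σ : Fin (m+1) → Bool =>
              if r - a 0 < (∑ j : Fin m, a j.succ * sgn1 (σ j.succ))
                  ∧ (∑ j : Fin m, a j.succ * sgn1 (σ j.succ)) ≤ r + a 0 then (1:ℕ) else 0)]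
        refine Finset.sum_congr rfl fun p _ => if_congr ?_ rfl rfl
        simp
    _ = ∑ c : Bool, ∑ τ : Fin m → Bool,
          (if r - a 0 < (∑ j : Fin m, a j.succ * sgn1 (τ j))
              ∧ (∑ j : Fin m, a j.succ * sgn1 (τ j)) ≤ r + a 0 then 1 else 0) := by
        rw [Fintype.sum_prod_type]
    _ = 2 * N (List.ofFn fun j : Fin m => a j.succ)
          (fun z => r - a 0 < z ∧ z ≤ r + a 0) := by
        rw [Fintype.sum_bool, ← count_eq m (fun j => a j.succ)
          (fun z => r - a 0 < z ∧ z ≤ r + a 0), two_mul]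
        congr 1 <;> refine Finset.sum_congr rfl fun τ _ => ?_ <;> congr 1

end FID

/-- **Decay of the first influence.** For `a₁ ≥ a₂ ≥ ... ≥ aₙ ≥ 0` and the
halfspaces `f_s = 1{a·x > s}`: for any `|s| ≤ t`, `5·I₁(f_s) ≥ I₁(f_t)`. -/
theorem first_influence_decay (n : ℕ) (hn : 0 < n) (a : Fin n → ℝ)
    (ha0 : ∀ i, 0 ≤ a i) (hmono : ∀ i j : Fin n, i ≤ j → a j ≤ a i)
    (s t : ℝ) (hst : |s| ≤ t) :
    infl n ⟨0, hn⟩ (halfspace n a t) ≤ 5 * infl n ⟨0, hn⟩ (halfspace n a s) := by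
  obtain ⟨m, rfl⟩ : ∃ m, n = m + 1 := ⟨n - 1, by omega⟩
  have h0 : (⟨0, hn⟩ : Fin (m+1)) = 0 := by
    apply Fin.ext
    simp
  have hA : 0 ≤ a 0 := ha0 0
  have hs1 : s ≤ t := le_trans (le_abs_self s) hst
  have hs2 : -t ≤ s := by
    have := neg_abs_le s; linarith
  set L := List.ofFn fun j : Fin m => a j.succ with hLdef
  have hW : ∀ b ∈ L, 0 ≤ b ∧ b ≤ a 0 := by
    intro c hc
    rw [hLdef, List.mem_ofFn] at hc
    obtain ⟨j, rfl⟩ := hc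
    exact ⟨ha0 _, hmono 0 j.succ (Fin.zero_le _)⟩
  have hjm : FID.N L (FID.Jmem true (s - a 0) (s + a 0))
      = FID.N L (fun z => s - a 0 < z ∧ z ≤ s + a 0) :=
    FID.N_congr L fun z => by simp [FID.Jmem]
  have hN : FID.N L (fun z => t - a 0 < z ∧ z ≤ t + a 0)
      ≤ 5 * FID.N L (fun z => s - a 0 < z ∧ z ≤ s + a 0) := by
    rw [← hjm]
    exact FID.main (a 0) L hW (t - a 0) (t + a 0) (s - a 0) (s + a 0) true
      (by linarith) (by ring) (by linarith) (by linarith)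
  rw [infl, infl, h0]
  have e : ∀ r : ℝ, cubePr (m+1) (fun x => halfspace (m+1) a r x
        ≠ halfspace (m+1) a r (Function.update x 0 (!x 0)))
      = ((2 * FID.N L (fun z => r - a 0 < z ∧ z ≤ r + a 0) : ℕ) : ℝ) / 2 ^ (m+1) := by
    intro r
    have hc := FID.card_eq m a hA r
    rw [cubePr, ← hc]
    congr 3
    exact Finset.filter_congr_decidable _ _ _
  rw [e t, e s]
  have hAB : ((2 * FID.N L fun z => t - a 0 < z ∧ z ≤ t + a 0 : ℕ) : ℝ)
      ≤ 5 * ((2 * FID.N L fun z => s - a 0 < z ∧ z ≤ s + a 0 : ℕ) : ℝ) := by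
    have h5 : (2 * FID.N L fun z => t - a 0 < z ∧ z ≤ t + a 0)
        ≤ 5 * (2 * FID.N L fun z => s - a 0 < z ∧ z ≤ s + a 0) := by omega
    exact_mod_cast h5
  calc ((2 * FID.N L fun z => t - a 0 < z ∧ z ≤ t + a 0 : ℕ) : ℝ) / 2 ^ (m+1)
      ≤ (5 * ((2 * FID.N L fun z => s - a 0 < z ∧ z ≤ s + a 0 : ℕ) : ℝ)) / 2 ^ (m+1) := by
        gcongr
    _ = 5 * (((2 * FID.N L fun z => s - a 0 < z ∧ z ≤ s + a 0 : ℕ) : ℝ) / 2 ^ (m+1)) := by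
        ring

end
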